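/- Let g be the 6-dimensional real nilpotent Lie algebra with nonzero brackets [e₁,e₂] = e₄, [e₁,e₄] = e₅, [e₂,e₄] = e₆. The real vector space of ad-invariant symmetric bilinear forms on g has dimension exactly 7; explicitly, a symmetric bilinear form β is ad-invariant if and only if β(eᵢ, eⱼ) = 0 for all pairs (i,j) with i ≤ j except possibly the six pairs with i,j ∈ {1,2,3} and the components β(e₁,e₆) = -β(e₂,e₅) = β(e₄,e₄), which constitute one additional free parameter. -/

import Mathlib

/-- The space of ad-invariant symmetric bilinear forms on a real Lie algebra `g`. -/
noncomputable def adInvSymmForms (g : Type*) [LieRing g] [LieAlgebra ℝ g] :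
    Submodule ℝ (g →ₗ[ℝ] g →ₗ[ℝ] ℝ) where
  carrier := {β | (∀ x y : g, β x y = β y x) ∧ ∀ x y z : g, β ⁅x, y⁆ z + β y ⁅x, z⁆ = 0}
  add_mem' := by
    rintro β γ ⟨hs, hi⟩ ⟨hs', hi'⟩
    refine ⟨fun x y => ?_, fun x y z => ?_⟩
    · simp only [LinearMap.add_apply]; rw [hs x y, hs' x y]
    · simp only [LinearMap.add_apply]
      have h1 := hi x y z; have h2 := hi' x y z; linarith
  zero_mem' := by
    refine ⟨fun x y => ?_, fun x y z => ?_⟩ <;> simp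
  smul_mem' := by
    rintro c β ⟨hs, hi⟩
    refine ⟨fun x y => ?_, fun x y z => ?_⟩
    · simp only [LinearMap.smul_apply, smul_eq_mul]; rw [hs x y]
    · simp only [LinearMap.smul_apply, smul_eq_mul]; linear_combination c * hi x y z

noncomputable def Eform {g : Type*} [LieRing g] [LieAlgebra ℝ g]
    (e : Module.Basis (Fin 6) ℝ g) (i j : Fin 6) : g →ₗ[ℝ] g →ₗ[ℝ] ℝ :=
  (e.coord i).smulRight (e.coord j)

theorem Eform_apply {g : Type*} [LieRing g] [LieAlgebra ℝ g]
    (e : Module.Basis (Fin 6) ℝ g) (i j : Fin 6) (x y : g) :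
    Eform e i j x y = e.repr x i * e.repr y j := by
  simp [Eform, Module.Basis.coord_apply, smul_eq_mul]

theorem mem_adInvSymmForms {g : Type*} [LieRing g] [LieAlgebra ℝ g]
    (β : g →ₗ[ℝ] g →ₗ[ℝ] ℝ) :
    β ∈ adInvSymmForms g ↔
      (∀ x y : g, β x y = β y x) ∧ ∀ x y z : g, β ⁅x, y⁆ z + β y ⁅x, z⁆ = 0 := Iff.rfl

theorem inv_of_basis {g : Type*} [LieRing g] [LieAlgebra ℝ g]
    (e : Module.Basis (Fin 6) ℝ g) (β : g →ₗ[ℝ] g →ₗ[ℝ] ℝ)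
    (h : ∀ i j k : Fin 6, β ⁅e i, e j⁆ (e k) + β (e j) ⁅e i, e k⁆ = 0) :
    ∀ x y z : g, β ⁅x, y⁆ z + β y ⁅x, z⁆ = 0 := by
  have key1 : ∀ (i j : Fin 6) (z : g), β ⁅e i, e j⁆ z + β (e j) ⁅e i, z⁆ = 0 := by
    intro i j z
    conv_lhs => rw [← e.sum_repr z]
    simp only [← LieAlgebra.ad_apply (R := ℝ), map_sum, map_smul, smul_eq_mul,
      LinearMap.sum_apply, LinearMap.smul_apply]
    rw [← Finset.sum_add_distrib]
    refine Finset.sum_eq_zero fun k _ => ?_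
    have := h i j k
    simp only [← LieAlgebra.ad_apply (R := ℝ)] at this
    linear_combination (e.repr z k) * this
  have key2 : ∀ (i : Fin 6) (y z : g), β ⁅e i, y⁆ z + β y ⁅e i, z⁆ = 0 := by
    intro i y z
    conv_lhs => rw [← e.sum_repr y]
    simp only [← LieAlgebra.ad_apply (R := ℝ), map_sum, map_smul, smul_eq_mul,
      LinearMap.sum_apply, LinearMap.smul_apply]
    rw [← Finset.sum_add_distrib]
    refine Finset.sum_eq_zero fun j _ => ?_
    have := key1 i j z
    simp only [← LieAlgebra.ad_apply (R := ℝ)] at this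
    linear_combination (e.repr y j) * this
  intro x y z
  conv_lhs => rw [← e.sum_repr x]
  simp only [← LieAlgebra.ad_apply (R := ℝ), ← LieHom.coe_toLinearMap]
  simp only [map_sum, map_smul, smul_eq_mul,
    LinearMap.sum_apply, LinearMap.smul_apply]
  rw [← Finset.sum_add_distrib]
  refine Finset.sum_eq_zero fun i _ => ?_
  have := key2 i y z
  simp only [← LieAlgebra.ad_apply (R := ℝ)] at this
  linear_combination (e.repr x i) * this

set_option maxHeartbeats 2000000 in
theorem char {g : Type*} [LieRing g] [LieAlgebra ℝ g]
    (e : Module.Basis (Fin 6) ℝ g)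
    (h12 : ⁅e 0, e 1⁆ = e 3) (h14 : ⁅e 0, e 3⁆ = e 4) (h24 : ⁅e 1, e 3⁆ = e 5)
    (h0 : ∀ i j : Fin 6,
      (i, j) ∉ ({(0,1), (1,0), (0,3), (3,0), (1,3), (3,1)} : Set (Fin 6 × Fin 6)) →
      ⁅e i, e j⁆ = 0)
    (β : g →ₗ[ℝ] g →ₗ[ℝ] ℝ) (hsym : ∀ x y : g, β x y = β y x) :
      ((∀ x y z : g, β ⁅x, y⁆ z + β y ⁅x, z⁆ = 0) ↔
        ((∀ i j : Fin 6, i ≤ j → ¬(i ≤ 2 ∧ j ≤ 2) →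
            (i, j) ≠ (0, 5) → (i, j) ≠ (1, 4) → (i, j) ≠ (3, 3) →
            β (e i) (e j) = 0) ∧
          β (e 0) (e 5) = β (e 3) (e 3) ∧
          β (e 1) (e 4) = - β (e 3) (e 3))) := by
  have h21 : ⁅e 1, e 0⁆ = -(e 3) := by rw [← lie_skew, h12]
  have h41' : ⁅e 3, e 0⁆ = -(e 4) := by rw [← lie_skew, h14]
  have h42' : ⁅e 3, e 1⁆ = -(e 5) := by rw [← lie_skew, h24]
  constructor
  · intro hinv
    have H : ∀ i j k : Fin 6, β ⁅e i, e j⁆ (e k) + β (e j) ⁅e i, e k⁆ = 0 :=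
      fun i j k => hinv (e i) (e j) (e k)
    have b30 : β (e 3) (e 0) = 0 := by
      have := H 0 1 0; rw [h12, h0 0 0 (by decide)] at this; simpa using this
    have b13 : β (e 1) (e 3) = 0 := by
      have := H 0 1 1; rw [h12] at this
      have h' := hsym (e 3) (e 1); linarith
    have b32 : β (e 3) (e 2) = 0 := by
      have := H 0 1 2; rw [h12, h0 0 2 (by decide)] at this; simpa using this
    have b14eq : β (e 1) (e 4) = - β (e 3) (e 3) := by
      have := H 0 1 3; rw [h12, h14] at this; linarith
    have b34 : β (e 3) (e 4) = 0 := by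
      have := H 0 1 4; rw [h12, h0 0 4 (by decide)] at this; simpa using this
    have b35 : β (e 3) (e 5) = 0 := by
      have := H 0 1 5; rw [h12, h0 0 5 (by decide)] at this; simpa using this
    have b40 : β (e 4) (e 0) = 0 := by
      have := H 0 3 0; rw [h14, h0 0 0 (by decide)] at this; simpa using this
    have b42 : β (e 4) (e 2) = 0 := by
      have := H 0 3 2; rw [h14, h0 0 2 (by decide)] at this; simpa using this
    have b44 : β (e 4) (e 4) = 0 := by
      have := H 0 3 4; rw [h14, h0 0 4 (by decide)] at this; simpa using this
    have b45 : β (e 4) (e 5) = 0 := by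
      have := H 0 3 5; rw [h14, h0 0 5 (by decide)] at this; simpa using this
    have b05eq : β (e 0) (e 5) = β (e 3) (e 3) := by
      have := H 1 3 0; rw [h24, h21] at this
      have h' := hsym (e 5) (e 0); simp only [map_neg] at this; linarith
    have b51 : β (e 5) (e 1) = 0 := by
      have := H 1 3 1; rw [h24, h0 1 1 (by decide)] at this; simpa using this
    have b52 : β (e 5) (e 2) = 0 := by
      have := H 1 3 2; rw [h24, h0 1 2 (by decide)] at this; simpa using this
    have b55 : β (e 5) (e 5) = 0 := by
      have := H 1 3 5; rw [h24, h0 1 5 (by decide)] at this; simpa using this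
    have b03' : β (e 0) (e 3) = 0 := (hsym (e 0) (e 3)).trans b30
    have b04' : β (e 0) (e 4) = 0 := (hsym (e 0) (e 4)).trans b40
    have b23' : β (e 2) (e 3) = 0 := (hsym (e 2) (e 3)).trans b32
    have b24' : β (e 2) (e 4) = 0 := (hsym (e 2) (e 4)).trans b42
    have b15' : β (e 1) (e 5) = 0 := (hsym (e 1) (e 5)).trans b51
    have b25' : β (e 2) (e 5) = 0 := (hsym (e 2) (e 5)).trans b52
    refine ⟨?_, b05eq, b14eq⟩
    intro i j hij hn2 hne1 hne2 hne3
    fin_cases i <;> fin_cases j <;>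
      first
      | assumption
      | exact absurd hij (by decide)
      | exact absurd ⟨by decide, by decide⟩ hn2
      | exact absurd rfl hne1
      | exact absurd rfl hne2
      | exact absurd rfl hne3
  · rintro ⟨hz, h05, h14'⟩
    have z03 : β (e 0) (e 3) = 0 := hz 0 3 (by decide) (by decide) (by decide) (by decide) (by decide)
    have z30 : β (e 3) (e 0) = 0 := (hsym (e 3) (e 0)).trans z03
    have z04 : β (e 0) (e 4) = 0 := hz 0 4 (by decide) (by decide) (by decide) (by decide) (by decide)
    have z40 : β (e 4) (e 0) = 0 := (hsym (e 4) (e 0)).trans z04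
    have z13 : β (e 1) (e 3) = 0 := hz 1 3 (by decide) (by decide) (by decide) (by decide) (by decide)
    have z31 : β (e 3) (e 1) = 0 := (hsym (e 3) (e 1)).trans z13
    have z15 : β (e 1) (e 5) = 0 := hz 1 5 (by decide) (by decide) (by decide) (by decide) (by decide)
    have z51 : β (e 5) (e 1) = 0 := (hsym (e 5) (e 1)).trans z15
    have z23 : β (e 2) (e 3) = 0 := hz 2 3 (by decide) (by decide) (by decide) (by decide) (by decide)
    have z32 : β (e 3) (e 2) = 0 := (hsym (e 3) (e 2)).trans z23
    have z24 : β (e 2) (e 4) = 0 := hz 2 4 (by decide) (by decide) (by decide) (by decide) (by decide)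
    have z42 : β (e 4) (e 2) = 0 := (hsym (e 4) (e 2)).trans z24
    have z25 : β (e 2) (e 5) = 0 := hz 2 5 (by decide) (by decide) (by decide) (by decide) (by decide)
    have z52 : β (e 5) (e 2) = 0 := (hsym (e 5) (e 2)).trans z25
    have z34 : β (e 3) (e 4) = 0 := hz 3 4 (by decide) (by decide) (by decide) (by decide) (by decide)
    have z43 : β (e 4) (e 3) = 0 := (hsym (e 4) (e 3)).trans z34
    have z35 : β (e 3) (e 5) = 0 := hz 3 5 (by decide) (by decide) (by decide) (by decide) (by decide)
    have z53 : β (e 5) (e 3) = 0 := (hsym (e 5) (e 3)).trans z35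
    have z44 : β (e 4) (e 4) = 0 := hz 4 4 (by decide) (by decide) (by decide) (by decide) (by decide)
    have z45 : β (e 4) (e 5) = 0 := hz 4 5 (by decide) (by decide) (by decide) (by decide) (by decide)
    have z54 : β (e 5) (e 4) = 0 := (hsym (e 5) (e 4)).trans z45
    have z55 : β (e 5) (e 5) = 0 := hz 5 5 (by decide) (by decide) (by decide) (by decide) (by decide)
    have z50 : β (e 5) (e 0) = β (e 3) (e 3) := (hsym (e 5) (e 0)).trans h05
    have z41 : β (e 4) (e 1) = - β (e 3) (e 3) := (hsym (e 4) (e 1)).trans h14'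
    have br00 : ⁅e 0, e 0⁆ = 0 := h0 0 0 (by decide)
    have br02 : ⁅e 0, e 2⁆ = 0 := h0 0 2 (by decide)
    have br04 : ⁅e 0, e 4⁆ = 0 := h0 0 4 (by decide)
    have br05 : ⁅e 0, e 5⁆ = 0 := h0 0 5 (by decide)
    have br11 : ⁅e 1, e 1⁆ = 0 := h0 1 1 (by decide)
    have br12 : ⁅e 1, e 2⁆ = 0 := h0 1 2 (by decide)
    have br14 : ⁅e 1, e 4⁆ = 0 := h0 1 4 (by decide)
    have br15 : ⁅e 1, e 5⁆ = 0 := h0 1 5 (by decide)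
    have br20 : ⁅e 2, e 0⁆ = 0 := h0 2 0 (by decide)
    have br21 : ⁅e 2, e 1⁆ = 0 := h0 2 1 (by decide)
    have br22 : ⁅e 2, e 2⁆ = 0 := h0 2 2 (by decide)
    have br23 : ⁅e 2, e 3⁆ = 0 := h0 2 3 (by decide)
    have br24 : ⁅e 2, e 4⁆ = 0 := h0 2 4 (by decide)
    have br25 : ⁅e 2, e 5⁆ = 0 := h0 2 5 (by decide)
    have br32 : ⁅e 3, e 2⁆ = 0 := h0 3 2 (by decide)
    have br33 : ⁅e 3, e 3⁆ = 0 := h0 3 3 (by decide)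
    have br34 : ⁅e 3, e 4⁆ = 0 := h0 3 4 (by decide)
    have br35 : ⁅e 3, e 5⁆ = 0 := h0 3 5 (by decide)
    have br40 : ⁅e 4, e 0⁆ = 0 := h0 4 0 (by decide)
    have br41 : ⁅e 4, e 1⁆ = 0 := h0 4 1 (by decide)
    have br42 : ⁅e 4, e 2⁆ = 0 := h0 4 2 (by decide)
    have br43 : ⁅e 4, e 3⁆ = 0 := h0 4 3 (by decide)
    have br44 : ⁅e 4, e 4⁆ = 0 := h0 4 4 (by decide)
    have br45 : ⁅e 4, e 5⁆ = 0 := h0 4 5 (by decide)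
    have br50 : ⁅e 5, e 0⁆ = 0 := h0 5 0 (by decide)
    have br51 : ⁅e 5, e 1⁆ = 0 := h0 5 1 (by decide)
    have br52 : ⁅e 5, e 2⁆ = 0 := h0 5 2 (by decide)
    have br53 : ⁅e 5, e 3⁆ = 0 := h0 5 3 (by decide)
    have br54 : ⁅e 5, e 4⁆ = 0 := h0 5 4 (by decide)
    have br55 : ⁅e 5, e 5⁆ = 0 := h0 5 5 (by decide)
    apply inv_of_basis e β
    intro i j k
    fin_cases i <;> fin_cases j <;> fin_cases k <;>
      simp [h12, h14, h24, h21, h41', h42', br00, br02, br04, br05, br11, br12, br14, br15, br20, br21, br22, br23, br24, br25, br32, br33, br34, br35, br40, br41, br42, br43, br44, br45, br50, br51, br52, br53, br54, br55, z03, z04, z13, z15, z23, z24, z25, z34, z35, z44, z45, z55, z30, z40, z31, z51, z32, z42, z52, z43, z53, z54, z50, z41, h05, h14']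

set_option maxHeartbeats 2000000 in
/-- For the 6-dimensional nilpotent Lie algebra with nonzero brackets
`[e₁,e₂] = e₄`, `[e₁,e₄] = e₅`, `[e₂,e₄] = e₆` (0-indexed below), the space of
ad-invariant symmetric bilinear forms has dimension exactly `7`; explicitly, a
symmetric bilinear form `β` is ad-invariant iff `β(eᵢ,eⱼ) = 0` for all `i ≤ j` except
possibly the six pairs with `i,j ∈ {1,2,3}` and the components
`β(e₁,e₆) = -β(e₂,e₅) = β(e₄,e₄)`, which constitute one additional free parameter. -/
theorem stmt_14 {g : Type*} [LieRing g] [LieAlgebra ℝ g]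
    (e : Module.Basis (Fin 6) ℝ g)
    (h12 : ⁅e 0, e 1⁆ = e 3) (h14 : ⁅e 0, e 3⁆ = e 4) (h24 : ⁅e 1, e 3⁆ = e 5)
    (h0 : ∀ i j : Fin 6,
      (i, j) ∉ ({(0,1), (1,0), (0,3), (3,0), (1,3), (3,1)} : Set (Fin 6 × Fin 6)) →
      ⁅e i, e j⁆ = 0) :
    Module.finrank ℝ (adInvSymmForms g) = 7 ∧
    (∀ β : g →ₗ[ℝ] g →ₗ[ℝ] ℝ, (∀ x y : g, β x y = β y x) →
      ((∀ x y z : g, β ⁅x, y⁆ z + β y ⁅x, z⁆ = 0) ↔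
        ((∀ i j : Fin 6, i ≤ j → ¬(i ≤ 2 ∧ j ≤ 2) →
            (i, j) ≠ (0, 5) → (i, j) ≠ (1, 4) → (i, j) ≠ (3, 3) →
            β (e i) (e j) = 0) ∧
          β (e 0) (e 5) = β (e 3) (e 3) ∧
          β (e 1) (e 4) = - β (e 3) (e 3)))) := by
  classical
  refine ⟨?_, fun β hsym => char e h12 h14 h24 h0 β hsym⟩
  set p : Fin 7 → Fin 6 × Fin 6 := ![(0,0),(0,1),(0,2),(1,1),(1,2),(2,2),(3,3)] with hp
  set φ : adInvSymmForms g →ₗ[ℝ] (Fin 7 → ℝ) :=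
    LinearMap.pi (fun m =>
      ((LinearMap.applyₗ (e (p m).2)).comp (LinearMap.applyₗ (e (p m).1))).comp
        (adInvSymmForms g).subtype) with hφ
  have happ : ∀ (β : adInvSymmForms g) (m : Fin 7),
      φ β m = (β : g →ₗ[ℝ] g →ₗ[ℝ] ℝ) (e (p m).1) (e (p m).2) := by
    intro β m; simp [hφ]
  have hinj : Function.Injective φ := by
    letI : AddCommGroup (adInvSymmForms g) := by
      exact @Submodule.addCommGroup ℝ _ _ LinearMap.addCommGroup LinearMap.module (adInvSymmForms g)
    rw [injective_iff_map_eq_zero]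
    intro β hβ
    obtain ⟨hsym, hinv⟩ := (mem_adInvSymmForms _).mp β.2
    obtain ⟨hz, hc05, hc14⟩ := (char e h12 h14 h24 h0 _ hsym).mp hinv
    have h7 : ∀ m : Fin 7, (β : g →ₗ[ℝ] g →ₗ[ℝ] ℝ) (e (p m).1) (e (p m).2) = 0 := by
      intro m; rw [← happ, hβ]; rfl
    have c00 : (β : g →ₗ[ℝ] g →ₗ[ℝ] ℝ) (e 0) (e 0) = 0 := by simpa [hp] using h7 0
    have c01 : (β : g →ₗ[ℝ] g →ₗ[ℝ] ℝ) (e 0) (e 1) = 0 := by simpa [hp] using h7 1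
    have c02 : (β : g →ₗ[ℝ] g →ₗ[ℝ] ℝ) (e 0) (e 2) = 0 := by simpa [hp] using h7 2
    have c11 : (β : g →ₗ[ℝ] g →ₗ[ℝ] ℝ) (e 1) (e 1) = 0 := by simpa [hp] using h7 3
    have c12 : (β : g →ₗ[ℝ] g →ₗ[ℝ] ℝ) (e 1) (e 2) = 0 := by simpa [hp] using h7 4
    have c22 : (β : g →ₗ[ℝ] g →ₗ[ℝ] ℝ) (e 2) (e 2) = 0 := by simpa [hp] using h7 5
    have c33 : (β : g →ₗ[ℝ] g →ₗ[ℝ] ℝ) (e 3) (e 3) = 0 := by simpa [hp] using h7 6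
    have hfacts : ∀ i j : Fin 6, (β : g →ₗ[ℝ] g →ₗ[ℝ] ℝ) (e i) (e j) = 0 := by
      have c03 : (β : g →ₗ[ℝ] g →ₗ[ℝ] ℝ) (e 0) (e 3) = 0 := hz 0 3 (by decide) (by decide) (by decide) (by decide) (by decide)
      have c04 : (β : g →ₗ[ℝ] g →ₗ[ℝ] ℝ) (e 0) (e 4) = 0 := hz 0 4 (by decide) (by decide) (by decide) (by decide) (by decide)
      have c05 : (β : g →ₗ[ℝ] g →ₗ[ℝ] ℝ) (e 0) (e 5) = 0 := hc05.trans c33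
      have c10 : (β : g →ₗ[ℝ] g →ₗ[ℝ] ℝ) (e 1) (e 0) = 0 := (hsym (e 1) (e 0)).trans (h7 1)
      have c13 : (β : g →ₗ[ℝ] g →ₗ[ℝ] ℝ) (e 1) (e 3) = 0 := hz 1 3 (by decide) (by decide) (by decide) (by decide) (by decide)
      have c14 : (β : g →ₗ[ℝ] g →ₗ[ℝ] ℝ) (e 1) (e 4) = 0 := by rw [hc14, c33]; ring
      have c15 : (β : g →ₗ[ℝ] g →ₗ[ℝ] ℝ) (e 1) (e 5) = 0 := hz 1 5 (by decide) (by decide) (by decide) (by decide) (by decide)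
      have c20 : (β : g →ₗ[ℝ] g →ₗ[ℝ] ℝ) (e 2) (e 0) = 0 := (hsym (e 2) (e 0)).trans (h7 2)
      have c21 : (β : g →ₗ[ℝ] g →ₗ[ℝ] ℝ) (e 2) (e 1) = 0 := (hsym (e 2) (e 1)).trans (h7 4)
      have c23 : (β : g →ₗ[ℝ] g →ₗ[ℝ] ℝ) (e 2) (e 3) = 0 := hz 2 3 (by decide) (by decide) (by decide) (by decide) (by decide)
      have c24 : (β : g →ₗ[ℝ] g →ₗ[ℝ] ℝ) (e 2) (e 4) = 0 := hz 2 4 (by decide) (by decide) (by decide) (by decide) (by decide)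
      have c25 : (β : g →ₗ[ℝ] g →ₗ[ℝ] ℝ) (e 2) (e 5) = 0 := hz 2 5 (by decide) (by decide) (by decide) (by decide) (by decide)
      have c30 : (β : g →ₗ[ℝ] g →ₗ[ℝ] ℝ) (e 3) (e 0) = 0 := (hsym (e 3) (e 0)).trans c03
      have c31 : (β : g →ₗ[ℝ] g →ₗ[ℝ] ℝ) (e 3) (e 1) = 0 := (hsym (e 3) (e 1)).trans c13
      have c32 : (β : g →ₗ[ℝ] g →ₗ[ℝ] ℝ) (e 3) (e 2) = 0 := (hsym (e 3) (e 2)).trans c23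
      have c34 : (β : g →ₗ[ℝ] g →ₗ[ℝ] ℝ) (e 3) (e 4) = 0 := hz 3 4 (by decide) (by decide) (by decide) (by decide) (by decide)
      have c35 : (β : g →ₗ[ℝ] g →ₗ[ℝ] ℝ) (e 3) (e 5) = 0 := hz 3 5 (by decide) (by decide) (by decide) (by decide) (by decide)
      have c40 : (β : g →ₗ[ℝ] g →ₗ[ℝ] ℝ) (e 4) (e 0) = 0 := (hsym (e 4) (e 0)).trans c04
      have c41 : (β : g →ₗ[ℝ] g →ₗ[ℝ] ℝ) (e 4) (e 1) = 0 := (hsym (e 4) (e 1)).trans c14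
      have c42 : (β : g →ₗ[ℝ] g →ₗ[ℝ] ℝ) (e 4) (e 2) = 0 := (hsym (e 4) (e 2)).trans c24
      have c43 : (β : g →ₗ[ℝ] g →ₗ[ℝ] ℝ) (e 4) (e 3) = 0 := (hsym (e 4) (e 3)).trans c34
      have c44 : (β : g →ₗ[ℝ] g →ₗ[ℝ] ℝ) (e 4) (e 4) = 0 := hz 4 4 (by decide) (by decide) (by decide) (by decide) (by decide)
      have c45 : (β : g →ₗ[ℝ] g →ₗ[ℝ] ℝ) (e 4) (e 5) = 0 := hz 4 5 (by decide) (by decide) (by decide) (by decide) (by decide)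
      have c50 : (β : g →ₗ[ℝ] g →ₗ[ℝ] ℝ) (e 5) (e 0) = 0 := (hsym (e 5) (e 0)).trans c05
      have c51 : (β : g →ₗ[ℝ] g →ₗ[ℝ] ℝ) (e 5) (e 1) = 0 := (hsym (e 5) (e 1)).trans c15
      have c52 : (β : g →ₗ[ℝ] g →ₗ[ℝ] ℝ) (e 5) (e 2) = 0 := (hsym (e 5) (e 2)).trans c25
      have c53 : (β : g →ₗ[ℝ] g →ₗ[ℝ] ℝ) (e 5) (e 3) = 0 := (hsym (e 5) (e 3)).trans c35
      have c54 : (β : g →ₗ[ℝ] g →ₗ[ℝ] ℝ) (e 5) (e 4) = 0 := (hsym (e 5) (e 4)).trans c45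
      have c55 : (β : g →ₗ[ℝ] g →ₗ[ℝ] ℝ) (e 5) (e 5) = 0 := hz 5 5 (by decide) (by decide) (by decide) (by decide) (by decide)
      intro i j
      fin_cases i <;> fin_cases j <;> assumption
    apply Subtype.ext
    exact LinearMap.ext_basis e e fun i j => by rw [hfacts i j]; rfl
  have hsurj : Function.Surjective φ := by
    intro v
    set γ : g →ₗ[ℝ] g →ₗ[ℝ] ℝ :=
      v 0 • Eform e 0 0 + v 1 • (Eform e 0 1 + Eform e 1 0) + v 2 • (Eform e 0 2 + Eform e 2 0) +
      v 3 • Eform e 1 1 + v 4 • (Eform e 1 2 + Eform e 2 1) + v 5 • Eform e 2 2 +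
      v 6 • (Eform e 3 3 + Eform e 0 5 + Eform e 5 0 - Eform e 1 4 - Eform e 4 1) with hγ
    have hent : ∀ a b : Fin 6, γ (e a) (e b) =
        v 0 * (e.repr (e a) 0 * e.repr (e b) 0) +
        v 1 * (e.repr (e a) 0 * e.repr (e b) 1 + e.repr (e a) 1 * e.repr (e b) 0) +
        v 2 * (e.repr (e a) 0 * e.repr (e b) 2 + e.repr (e a) 2 * e.repr (e b) 0) +
        v 3 * (e.repr (e a) 1 * e.repr (e b) 1) +
        v 4 * (e.repr (e a) 1 * e.repr (e b) 2 + e.repr (e a) 2 * e.repr (e b) 1) +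
        v 5 * (e.repr (e a) 2 * e.repr (e b) 2) +
        v 6 * (e.repr (e a) 3 * e.repr (e b) 3 + e.repr (e a) 0 * e.repr (e b) 5 +
          e.repr (e a) 5 * e.repr (e b) 0 - e.repr (e a) 1 * e.repr (e b) 4 -
          e.repr (e a) 4 * e.repr (e b) 1) := by
      intro a b
      simp only [hγ, LinearMap.add_apply, LinearMap.sub_apply, LinearMap.smul_apply,
        Eform_apply, smul_eq_mul]
      try ring
    have hsymγ : ∀ x y : g, γ x y = γ y x := by
      have hflip : γ.flip = γ := by
        refine LinearMap.ext_basis e e fun i j => ?_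
        rw [LinearMap.flip_apply, hent, hent]
        ring
      intro x y
      conv_rhs => rw [← hflip]
      rw [LinearMap.flip_apply]
    have hmem : γ ∈ adInvSymmForms g := by
      rw [mem_adInvSymmForms]
      refine ⟨hsymγ, ?_⟩
      rw [char e h12 h14 h24 h0 γ hsymγ]
      refine ⟨?_, ?_, ?_⟩
      · intro i j hij hn2 hne1 hne2 hne3
        fin_cases i <;> fin_cases j <;>
          first
          | exact absurd hij (by decide)
          | exact absurd ⟨by decide, by decide⟩ hn2
          | exact absurd rfl hne1
          | exact absurd rfl hne2
          | exact absurd rfl hne3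
          | (rw [hent]; simp [Module.Basis.repr_self, Finsupp.single_apply])
      · rw [hent, hent]; simp [Module.Basis.repr_self, Finsupp.single_apply]
      · rw [hent, hent]; simp [Module.Basis.repr_self, Finsupp.single_apply]; try ring
    refine ⟨⟨γ, hmem⟩, ?_⟩
    funext m
    rw [happ]
    fin_cases m
    · show γ (e 0) (e 0) = v 0
      rw [hent]; simp [Module.Basis.repr_self, Finsupp.single_apply]
    · show γ (e 0) (e 1) = v 1
      rw [hent]; simp [Module.Basis.repr_self, Finsupp.single_apply]
    · show γ (e 0) (e 2) = v 2
      rw [hent]; simp [Module.Basis.repr_self, Finsupp.single_apply]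
    · show γ (e 1) (e 1) = v 3
      rw [hent]; simp [Module.Basis.repr_self, Finsupp.single_apply]
    · show γ (e 1) (e 2) = v 4
      rw [hent]; simp [Module.Basis.repr_self, Finsupp.single_apply]
    · show γ (e 2) (e 2) = v 5
      rw [hent]; simp [Module.Basis.repr_self, Finsupp.single_apply]
    · show γ (e 3) (e 3) = v 6
      rw [hent]; simp [Module.Basis.repr_self, Finsupp.single_apply]
  have equiv : adInvSymmForms g ≃ₗ[ℝ] (Fin 7 → ℝ) :=
    LinearEquiv.ofBijective φ ⟨hinj, hsurj⟩
  rw [equiv.finrank_eq, Module.finrank_fin_fun]
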